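/- Let ψ:[t₀,∞)→(0,∞) be non-increasing with tψ(t)<1 for all large t, and let Ψ(t)=tψ(t)/(1−tψ(t)). Let x∈[0,1) be irrational with partial quotients a_n(x) and convergent denominators q_n(x). If a_{n+1}(x)·a_n(x) > Ψ(q_n(x)) for infinitely many n, then x is ψ-Dirichlet non-improvable, i.e. x∉D(ψ). -/

import Mathlib

open Filter MeasureTheory Set

/-- The set `D(ψ)` of `ψ`-Dirichlet improvable numbers: those `x ∈ ℝ` such that for all
sufficiently large `t` the system `|qx - p| < ψ t`, `|q| < t` has a nontrivial integer
solution `(p, q)`. -/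
def DirichletSet (ψ : ℝ → ℝ) : Set ℝ :=
  {x | ∃ N : ℝ, ∀ t : ℝ, t > N →
    ∃ p q : ℤ, (p, q) ≠ (0, 0) ∧ |(q : ℝ) * x - p| < ψ t ∧ |(q : ℝ)| < t}

/-- The Gauss map `T(x) = 1/x mod 1`, with `T(0) = 0`. -/
noncomputable def gaussMap (x : ℝ) : ℝ := if x = 0 then 0 else Int.fract (1 / x)

/-- `cfA x n` is the `n`-th partial quotient `a_n(x)` of the continued fraction
expansion of `x ∈ [0,1)`, for `n ≥ 1`: `a_n(x) = ⌊1 / T^{n-1}(x)⌋`. -/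
noncomputable def cfA (x : ℝ) (n : ℕ) : ℕ := ⌊1 / (gaussMap^[n - 1] x)⌋₊

/-- `cfQ x n` is the denominator `q_n(x)` of the `n`-th convergent of `x`:
`q₀ = 1`, `q₁ = a₁`, `q_{n+2} = a_{n+2} q_{n+1} + q_n`. -/
noncomputable def cfQ (x : ℝ) : ℕ → ℕ
  | 0 => 1
  | 1 => cfA x 1
  | (n + 2) => cfA x (n + 2) * cfQ x (n + 1) + cfQ x n

noncomputable def cfP (x : ℝ) : ℕ → ℕ
  | 0 => 0
  | 1 => 1
  | (n + 2) => cfA x (n + 2) * cfP x (n + 1) + cfP x n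

section aux
variable {x : ℝ}

lemma X_mem (hx : x ∈ Set.Ioo (0:ℝ) 1) (hirr : Irrational x) (n : ℕ) :
    gaussMap^[n] x ∈ Set.Ioo (0:ℝ) 1 ∧ Irrational (gaussMap^[n] x) := by
  induction n with
  | zero => exact ⟨hx, hirr⟩
  | succ n ih =>
    obtain ⟨⟨h0, h1⟩, hi⟩ := ih
    rw [Function.iterate_succ_apply']
    set y := gaussMap^[n] x with hy
    have hy0 : y ≠ 0 := ne_of_gt h0
    have hg : gaussMap y = Int.fract (1/y) := by rw [gaussMap, if_neg hy0]
    have hinv : Irrational (1/y) := by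
      rw [one_div]; exact hi.inv
    have hfr : Irrational (Int.fract (1/y)) := by
      rw [Int.fract]; exact hinv.sub_intCast _
    refine ⟨?_, by rw [hg]; exact hfr⟩
    rw [hg]
    refine ⟨lt_of_le_of_ne (Int.fract_nonneg _) ?_, Int.fract_lt_one _⟩
    exact fun hc => (hfr.ne_int 0 (by simpa using hc.symm)).elim

/-- basic facts packaged -/
lemma X_pos (hx : x ∈ Set.Ioo (0:ℝ) 1) (hirr : Irrational x) (n : ℕ) :
    0 < gaussMap^[n] x := (X_mem hx hirr n).1.1

lemma X_lt_one (hx : x ∈ Set.Ioo (0:ℝ) 1) (hirr : Irrational x) (n : ℕ) :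
    gaussMap^[n] x < 1 := (X_mem hx hirr n).1.2

lemma cfA_succ (n : ℕ) : cfA x (n + 1) = ⌊1 / (gaussMap^[n] x)⌋₊ := rfl

lemma one_le_cfA (hx : x ∈ Set.Ioo (0:ℝ) 1) (hirr : Irrational x) (n : ℕ) :
    1 ≤ cfA x (n + 1) := by
  rw [cfA_succ]
  have h0 := X_pos hx hirr n
  have h1 := X_lt_one hx hirr n
  have h : ((1:ℕ):ℝ) ≤ 1 / gaussMap^[n] x := by
    rw [Nat.cast_one, le_div_iff₀ h0]; linarith
  exact Nat.le_floor h

lemma cfA_le (hx : x ∈ Set.Ioo (0:ℝ) 1) (hirr : Irrational x) (n : ℕ) :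
    (cfA x (n + 1) : ℝ) ≤ 1 / gaussMap^[n] x := by
  rw [cfA_succ]
  exact Nat.floor_le (one_div_nonneg.mpr (X_pos hx hirr n).le)

lemma X_succ (hx : x ∈ Set.Ioo (0:ℝ) 1) (hirr : Irrational x) (n : ℕ) :
    gaussMap^[n+1] x = 1 / gaussMap^[n] x - cfA x (n + 1) := by
  rw [Function.iterate_succ_apply', gaussMap, if_neg (ne_of_gt (X_pos hx hirr n)),
    Int.fract, cfA_succ, natCast_floor_eq_intCast_floor
      (one_div_nonneg.mpr (X_pos hx hirr n).le)]

lemma one_le_cfQ (hx : x ∈ Set.Ioo (0:ℝ) 1) (hirr : Irrational x) :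
    ∀ n, 1 ≤ cfQ x n := by
  intro n
  induction n using Nat.strong_induction_on with
  | _ n ih =>
    match n with
    | 0 => simp [cfQ]
    | 1 => simpa [cfQ] using one_le_cfA hx hirr 0
    | (n+2) =>
      have h1 := ih (n+1) (by omega)
      have := one_le_cfA hx hirr (n+1)
      simp only [cfQ]
      nlinarith

lemma cfQ_add_two (n : ℕ) : cfQ x (n+2) = cfA x (n+2) * cfQ x (n+1) + cfQ x n := by
  rw [cfQ]

lemma cfP_add_two (n : ℕ) : cfP x (n+2) = cfA x (n+2) * cfP x (n+1) + cfP x n := by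
  rw [cfP]

lemma cfA_mul_cfQ_le (hx : x ∈ Set.Ioo (0:ℝ) 1) (hirr : Irrational x) (n : ℕ) :
    cfA x (n + 1) * cfQ x n ≤ cfQ x (n + 1) := by
  match n with
  | 0 => simp [cfQ]
  | (m+1) =>
    show cfA x (m+2) * cfQ x (m+1) ≤ cfQ x (m+2)
    have h : cfQ x (m+2) = cfA x (m+2) * cfQ x (m+1) + cfQ x m := cfQ_add_two m
    omega

lemma cfQ_le_succ (hx : x ∈ Set.Ioo (0:ℝ) 1) (hirr : Irrational x) (n : ℕ) :
    cfQ x n ≤ cfQ x (n + 1) :=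
  le_trans (Nat.le_mul_of_pos_left _ (one_le_cfA hx hirr n)) (cfA_mul_cfQ_le hx hirr n)

lemma le_two_cfQ (hx : x ∈ Set.Ioo (0:ℝ) 1) (hirr : Irrational x) :
    ∀ n, n ≤ 2 * cfQ x n := by
  intro n
  induction n using Nat.strong_induction_on with
  | _ n ih =>
    match n with
    | 0 => omega
    | 1 => have := one_le_cfQ hx hirr 1; omega
    | (n+2) =>
      have h1 := ih n (by omega)
      have h2 := one_le_cfQ hx hirr (n+1)
      have h3 := one_le_cfA hx hirr (n+1)
      simp only [cfQ]
      nlinarith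

lemma beta_eq (hx : x ∈ Set.Ioo (0:ℝ) 1) (hirr : Irrational x) :
    ∀ n, (cfQ x n : ℝ) * x - cfP x n
      = (-1)^n * ∏ k ∈ Finset.range (n+1), gaussMap^[k] x := by
  intro n
  induction n using Nat.strong_induction_on with
  | _ n ih =>
    match n with
    | 0 => simp [cfQ, cfP]
    | 1 =>
      have h0 := X_pos hx hirr 0
      have hs := X_succ hx hirr 0
      simp only [cfQ, cfP, Finset.prod_range_succ, Finset.prod_range_one, pow_one,
        Nat.cast_one]
      rw [hs]
      simp only [Function.iterate_zero_apply] at h0 ⊢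
      field_simp
      ring
    | (n+2) =>
      have e1 : (cfQ x (n+1) : ℝ) * x - cfP x (n+1)
          = (-1)^(n+1) * ((∏ k ∈ Finset.range (n+1), gaussMap^[k] x) * gaussMap^[n+1] x) := by
        have := ih (n+1) (by omega)
        rwa [Finset.prod_range_succ] at this
      have e0 : (cfQ x n : ℝ) * x - cfP x n
          = (-1)^n * ∏ k ∈ Finset.range (n+1), gaussMap^[k] x := ih n (by omega)
      have hs : gaussMap^[n+2] x = 1 / gaussMap^[n+1] x - cfA x (n + 2) :=
        X_succ hx hirr (n+1)
      have h0 : 0 < gaussMap^[n+1] x := X_pos hx hirr (n+1)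
      have key : gaussMap^[n+1] x * (gaussMap^[n+2] x + (cfA x (n+2) : ℝ)) = 1 := by
        rw [hs, sub_add_cancel, mul_one_div, div_self (ne_of_gt h0)]
      rw [cfQ_add_two, cfP_add_two, Finset.prod_range_succ, Finset.prod_range_succ (n := n+1)]
      push_cast
      linear_combination ((cfA x (n+2) : ℝ)) * e1 + e0
        - (-1)^n * (∏ k ∈ Finset.range (n+1), gaussMap^[k] x) * key

lemma det_eq (n : ℕ) :
    (cfP x (n+1) : ℤ) * cfQ x n - cfP x n * cfQ x (n+1) = (-1)^n := by
  induction n with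
  | zero => simp [cfP, cfQ]
  | succ n ih =>
    simp only [cfP, cfQ] at *
    push_cast at *
    ring_nf
    ring_nf at ih
    linarith [ih]

end aux

section aux2
variable {x : ℝ}

lemma prodX_pos (hx : x ∈ Set.Ioo (0:ℝ) 1) (hirr : Irrational x) (n : ℕ) :
    0 < ∏ k ∈ Finset.range n, gaussMap^[k] x :=
  Finset.prod_pos fun k _ => X_pos hx hirr k

lemma abs_beta (hx : x ∈ Set.Ioo (0:ℝ) 1) (hirr : Irrational x) (n : ℕ) :
    |(cfQ x n : ℝ) * x - cfP x n| = ∏ k ∈ Finset.range (n+1), gaussMap^[k] x := by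
  rw [beta_eq hx hirr, abs_mul, abs_pow, abs_neg, abs_one, one_pow, one_mul,
    abs_of_pos (prodX_pos hx hirr (n+1))]

lemma key_identity (hx : x ∈ Set.Ioo (0:ℝ) 1) (hirr : Irrational x) (m : ℕ) :
    (cfQ x (m+1) : ℝ) * (∏ k ∈ Finset.range (m+1), gaussMap^[k] x)
      + (cfQ x m : ℝ) * (∏ k ∈ Finset.range (m+2), gaussMap^[k] x) = 1 := by
  have b0 := beta_eq hx hirr m
  have b1 := beta_eq hx hirr (m+1)
  have d : ((cfP x (m+1) : ℝ) * cfQ x m - cfP x m * cfQ x (m+1)) = (-1)^m := by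
    exact_mod_cast congrArg (fun z : ℤ => (z : ℝ)) (det_eq (x := x) m)
  rcases Nat.even_or_odd m with hp | hp
  · rw [hp.neg_one_pow] at b0 d
    rw [(Even.add_one hp).neg_one_pow] at b1
    linear_combination (-(cfQ x (m+1) : ℝ)) * b0 + (cfQ x m : ℝ) * b1 + d
  · rw [hp.neg_one_pow] at b0 d
    rw [(Odd.add_one hp).neg_one_pow] at b1
    linear_combination (cfQ x (m+1) : ℝ) * b0 - (cfQ x m : ℝ) * b1 - d

lemma key_identity' (hx : x ∈ Set.Ioo (0:ℝ) 1) (hirr : Irrational x) (m : ℕ) :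
    (cfQ x (m+1) : ℝ) * (∏ k ∈ Finset.range (m+1), gaussMap^[k] x)
      + (cfQ x m : ℝ) * ((∏ k ∈ Finset.range (m+1), gaussMap^[k] x) * gaussMap^[m+1] x)
      = 1 := by
  have h0 := key_identity hx hirr m
  rwa [show (∏ k ∈ Finset.range (m+2), gaussMap^[k] x)
      = (∏ k ∈ Finset.range (m+1), gaussMap^[k] x) * gaussMap^[m+1] x
    from Finset.prod_range_succ _ (m+1)] at h0

lemma best_approx (hx : x ∈ Set.Ioo (0:ℝ) 1) (hirr : Irrational x) (m : ℕ)
    (p q : ℤ) (hq0 : 0 < q) (hqlt : q < (cfQ x (m+1) : ℤ)) :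
    (∏ k ∈ Finset.range (m+1), gaussMap^[k] x) ≤ |(q:ℝ) * x - p| := by
  set Dm := ∏ k ∈ Finset.range (m+1), gaussMap^[k] x with hDm
  set Dm1 := ∏ k ∈ Finset.range (m+2), gaussMap^[k] x with hDm1
  clear_value Dm Dm1
  have hDmpos : 0 < Dm := hDm ▸ prodX_pos hx hirr (m+1)
  have hDm1pos : 0 < Dm1 := hDm1 ▸ prodX_pos hx hirr (m+2)
  have hQ0 : (1:ℤ) ≤ (cfQ x m : ℤ) := by exact_mod_cast one_le_cfQ hx hirr m
  have hQ1 : (1:ℤ) ≤ (cfQ x (m+1) : ℤ) := by exact_mod_cast one_le_cfQ hx hirr (m+1)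
  have hd := det_eq (x := x) m
  -- find integer coordinates u, v
  obtain ⟨u, v, hp, hq⟩ : ∃ u v : ℤ,
      p = u * cfP x m + v * cfP x (m+1) ∧ q = u * cfQ x m + v * cfQ x (m+1) := by
    rcases Nat.even_or_odd m with hpar | hpar
    · rw [hpar.neg_one_pow] at hd
      exact ⟨q * cfP x (m+1) - p * cfQ x (m+1), p * cfQ x m - q * cfP x m,
        by linear_combination (-p) * hd, by linear_combination (-q) * hd⟩
    · rw [hpar.neg_one_pow] at hd
      exact ⟨p * cfQ x (m+1) - q * cfP x (m+1), q * cfP x m - p * cfQ x m,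
        by linear_combination p * hd, by linear_combination q * hd⟩
  have hpR : (p:ℝ) = u * cfP x m + v * cfP x (m+1) := by exact_mod_cast hp
  have hqR : (q:ℝ) = u * cfQ x m + v * cfQ x (m+1) := by exact_mod_cast hq
  have hrepr : (q:ℝ) * x - p
      = u * ((cfQ x m : ℝ) * x - cfP x m) + v * ((cfQ x (m+1) : ℝ) * x - cfP x (m+1)) := by
    linear_combination x * hqR - hpR
  have habs0 : |(cfQ x m : ℝ) * x - cfP x m| = Dm := (abs_beta hx hirr m).trans hDm.symm
  have habs1 : |(cfQ x (m+1) : ℝ) * x - cfP x (m+1)| = Dm1 :=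
    (abs_beta hx hirr (m+1)).trans hDm1.symm
  by_cases hv : v = 0
  · subst hv
    have hu : 0 < u := by
      by_contra hc
      push_neg at hc
      have : q ≤ 0 := by nlinarith
      omega
    have hu1 : (1:ℝ) ≤ |(u:ℝ)| := by
      rw [← Int.cast_abs]
      exact_mod_cast Int.one_le_abs (by omega)
    rw [hrepr]
    simp only [Int.cast_zero, zero_mul, add_zero]
    rw [abs_mul, habs0]
    nlinarith
  · have huv : u * v < 0 := by
      rcases lt_trichotomy v 0 with hvn | hv0 | hvp
      · have hu : 0 < u := by
          by_contra hc
          push_neg at hc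
          have h1 : v * cfQ x (m+1) ≤ -(cfQ x (m+1)) := by nlinarith
          have h2 : u * cfQ x m ≤ 0 := by nlinarith
          omega
        exact mul_neg_of_pos_of_neg hu hvn
      · exact absurd hv0 hv
      · have hu : u < 0 := by
          by_contra hc
          push_neg at hc
          have h1 : (cfQ x (m+1) : ℤ) ≤ v * cfQ x (m+1) := by nlinarith
          have h2 : 0 ≤ u * cfQ x m := by nlinarith
          omega
        exact mul_neg_of_neg_of_pos hu hvp
    -- the two terms have the same sign
    set A := (u:ℝ) * ((cfQ x m : ℝ) * x - cfP x m) with hA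
    set B := (v:ℝ) * ((cfQ x (m+1) : ℝ) * x - cfP x (m+1)) with hB
    clear_value A B
    have hene : ((-1:ℝ)^m) * ((-1:ℝ)^m) = 1 := by
      rw [← pow_add]
      exact Even.neg_one_pow ⟨m, rfl⟩
    have b0 : (cfQ x m : ℝ) * x - cfP x m = (-1)^m * Dm := by
      rw [hDm]; exact beta_eq hx hirr m
    have b1 : (cfQ x (m+1) : ℝ) * x - cfP x (m+1) = (-1)^(m+1) * Dm1 := by
      rw [hDm1]; exact beta_eq hx hirr (m+1)
    have hprodβ : ((cfQ x m : ℝ) * x - cfP x m) * ((cfQ x (m+1) : ℝ) * x - cfP x (m+1))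
        = -(Dm * Dm1) := by
      rw [b0, b1, pow_succ]
      linear_combination (-(Dm * Dm1)) * hene
    have huvR : ((u:ℝ) * v) < 0 := by exact_mod_cast huv
    have hAB : 0 < A * B := by
      have : A * B = ((u:ℝ) * v) * (((cfQ x m : ℝ) * x - cfP x m)
          * ((cfQ x (m+1) : ℝ) * x - cfP x (m+1))) := by rw [hA, hB]; ring
      rw [this, hprodβ]
      exact mul_pos_of_neg_of_neg huvR (by nlinarith)
    have hu0 : u ≠ 0 := by
      intro h0
      rw [h0] at huv
      simp at huv
    have hu1 : (1:ℝ) ≤ |(u:ℝ)| := by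
      rw [← Int.cast_abs]
      exact_mod_cast Int.one_le_abs hu0
    have hAabs : Dm ≤ |A| := by
      rw [hA, abs_mul, habs0]
      exact le_mul_of_one_le_left hDmpos.le hu1
    rw [hrepr]
    rcases mul_pos_iff.mp hAB with ⟨hApos, hBpos⟩ | ⟨hAneg, hBneg⟩
    · rw [abs_of_pos (by linarith : (0:ℝ) < A + B)]
      rw [abs_of_pos hApos] at hAabs
      linarith
    · rw [abs_of_neg (by linarith : A + B < 0)]
      rw [abs_of_neg hAneg] at hAabs
      linarith

end aux2

set_option maxHeartbeats 1000000 in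
/-- **Sufficient condition for Dirichlet non-improvability.** If
`a_{n+1}(x) a_n(x) > Ψ(q_n(x))` for infinitely many `n`, then `x ∉ D(ψ)`. -/
theorem not_mem_dirichletSet_of_prod_partial_quotients_gt
    (t₀ : ℝ) (ht₀ : 1 ≤ t₀) (ψ : ℝ → ℝ)
    (hψpos : ∀ t ∈ Ici t₀, 0 < ψ t) (hψanti : AntitoneOn ψ (Ici t₀))
    (hψ1 : ∃ T : ℝ, ∀ t ≥ T, t * ψ t < 1)
    (Ψ : ℝ → ℝ) (hΨ : ∀ t, Ψ t = t * ψ t / (1 - t * ψ t))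
    (x : ℝ) (hx : x ∈ Ico (0 : ℝ) 1) (hirr : Irrational x)
    (h : {n : ℕ | 0 < n ∧ Ψ (cfQ x n) < (cfA x (n + 1) : ℝ) * cfA x n}.Infinite) :
    x ∉ DirichletSet ψ := by
  rintro ⟨N, hN⟩
  obtain ⟨T, hT⟩ := hψ1
  have hx' : x ∈ Set.Ioo (0:ℝ) 1 := by
    refine ⟨lt_of_le_of_ne hx.1 ?_, hx.2⟩
    intro hc
    exact hirr.ne_int 0 (by simpa using hc.symm)
  set R := max (max N T) t₀ with hRdef
  obtain ⟨n, hnS, hngt⟩ := h.exists_gt (2 * ⌈R⌉₊ + 2)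
  obtain ⟨hn0, hΨa⟩ := hnS
  obtain ⟨m, rfl⟩ : ∃ m, n = m + 1 := ⟨n - 1, by omega⟩
  have hq2 : m + 1 ≤ 2 * cfQ x (m+1) := le_two_cfQ hx' hirr (m+1)
  have hqR : R < (cfQ x (m+1) : ℝ) := by
    have h1 : R ≤ (⌈R⌉₊ : ℝ) := Nat.le_ceil R
    have h2 : ⌈R⌉₊ + 1 ≤ cfQ x (m+1) := by omega
    have h3 : ((⌈R⌉₊ : ℝ) + 1 : ℝ) ≤ cfQ x (m+1) := by exact_mod_cast h2
    linarith
  set t := (cfQ x (m+1) : ℝ) with htdef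
  have htN : t > N := lt_of_le_of_lt ((le_max_left N T).trans (le_max_left _ t₀)) hqR
  have htT : t ≥ T := le_of_lt (lt_of_le_of_lt ((le_max_right N T).trans (le_max_left _ t₀)) hqR)
  have htt₀ : t ≥ t₀ := le_of_lt (lt_of_le_of_lt (le_max_right _ t₀) hqR)
  have ht1 : (1:ℝ) ≤ t := le_trans ht₀ htt₀
  have hψt : 0 < ψ t := hψpos t htt₀
  have hst : t * ψ t < 1 := hT t htT
  have hψlt1 : ψ t < 1 := by nlinarith
  obtain ⟨p, q, hne, habs, hqlt⟩ := hN t htN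
  have hq0 : q ≠ 0 := by
    rintro rfl
    have hp0 : p ≠ 0 := by simpa using hne
    have h1 : ((1:ℤ):ℝ) ≤ |(p:ℝ)| := by
      rw [← Int.cast_abs]
      exact_mod_cast Int.one_le_abs hp0
    simp only [Int.cast_zero, zero_mul, zero_sub, abs_neg] at habs
    push_cast at h1
    linarith
  have hqabs : -(cfQ x (m+1) : ℤ) < q ∧ q < (cfQ x (m+1) : ℤ) := by
    refine abs_lt.mp ?_
    have h1 : ((|q|:ℤ):ℝ) < ((cfQ x (m+1) : ℕ):ℝ) := by
      rw [Int.cast_abs]; exact hqlt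
    exact_mod_cast h1
  obtain ⟨p', q', hq'0, hq'lt, habs'⟩ : ∃ p' q' : ℤ, 0 < q' ∧ q' < (cfQ x (m+1) : ℤ)
      ∧ |(q':ℝ) * x - p'| < ψ t := by
    obtain ⟨hqa1, hqa2⟩ := hqabs
    rcases lt_or_gt_of_ne hq0 with hneg | hpos
    · refine ⟨-p, -q, by omega, by omega, ?_⟩
      push_cast
      rw [show -(q:ℝ) * x - (-(p:ℝ)) = -((q:ℝ) * x - p) by ring, abs_neg]
      exact habs
    · exact ⟨p, q, hpos, by omega, habs⟩
  have hba := best_approx hx' hirr m p' q' hq'0 hq'lt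
  have hDψ : (∏ k ∈ Finset.range (m+1), gaussMap^[k] x) < ψ t := lt_of_le_of_lt hba habs'
  set Dm := ∏ k ∈ Finset.range (m+1), gaussMap^[k] x with hDm
  set y := gaussMap^[m+1] x with hy
  have hDmpos : 0 < Dm := prodX_pos hx' hirr (m+1)
  have hy0 : 0 < y := X_pos hx' hirr (m+1)
  have hkey : t * Dm + (cfQ x m : ℝ) * (Dm * y) = 1 := key_identity' hx' hirr m
  have ha2y : (cfA x (m+2) : ℝ) * y ≤ 1 := by
    have h1 : (cfA x (m+2) : ℝ) ≤ 1 / y := cfA_le hx' hirr (m+1)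
    exact (le_div_iff₀ hy0).mp h1
  have haq : (cfA x (m+1) : ℝ) * (cfQ x m : ℝ) ≤ t := by
    rw [htdef]
    exact_mod_cast cfA_mul_cfQ_le hx' hirr m
  have hQ0 : (1:ℝ) ≤ (cfQ x m : ℝ) := by exact_mod_cast one_le_cfQ hx' hirr m
  have ha2 : (1:ℝ) ≤ (cfA x (m+2) : ℝ) := by exact_mod_cast one_le_cfA hx' hirr (m+1)
  have ha1 : (1:ℝ) ≤ (cfA x (m+1) : ℝ) := by exact_mod_cast one_le_cfA hx' hirr m
  have hΨt : Ψ t = t * ψ t / (1 - t * ψ t) := hΨ t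
  have hΨa' : Ψ t < (cfA x (m+2) : ℝ) * cfA x (m+1) := hΨa
  set Q0 := (cfQ x m : ℝ)
  set A1 := (cfA x (m+1) : ℝ)
  set A2 := (cfA x (m+2) : ℝ)
  clear_value t Dm y Q0 A1 A2
  clear hN h hT hba habs' hqlt habs hqabs hΨa hΨ hψpos hψanti hirr hx hx' hqR hq2 hngt
  have hQy : 0 < Q0 * y := by positivity
  have hpsum : ψ t * (t + Q0 * y) > 1 := by
    nlinarith [mul_pos (sub_pos.mpr hDψ) (show (0:ℝ) < t + Q0 * y by nlinarith)]
  have h1s : 0 < 1 - t * ψ t := by linarith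
  have hgt : Ψ t * (Q0 * y) > t := by
    rw [hΨt, div_mul_eq_mul_div, gt_iff_lt, lt_div_iff₀ h1s]
    nlinarith
  have hchain : A2 * A1 * (Q0 * y) ≤ t := by
    nlinarith [mul_le_of_le_one_right (show (0:ℝ) ≤ A1 * Q0 by nlinarith) ha2y]
  nlinarith [mul_lt_mul_of_pos_right hΨa' hQy]
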